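/- Fix Y ∈ ℝ. Let U : ℝ × ℝ → ℝ be C² on the strip ℝ × [Y,∞), subharmonic there (∂²U/∂x² + ∂²U/∂y² ≥ 0 at every point of the strip), 2π-periodic in the first variable (U(x+2π, y) = U(x, y) for all x ∈ ℝ, y ≥ Y), and assume the finite Dirichlet energy condition ∫_Y^∞ ∫₀^{2π} ((∂U/∂x)² + (∂U/∂y)²) dx dy < ∞. Then there exist a constant M and a sequence yₙ → ∞ such that U(0, yₙ) ≤ M for all n; in particular liminf_{y→∞} U(0,y) < ∞. -/

import Mathlib

open MeasureTheory Real Set Filter intervalIntegral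

/-- The partial derivative of `U : ℝ × ℝ → ℝ` in the first (x) variable. -/
noncomputable def pderivX (U : ℝ × ℝ → ℝ) (p : ℝ × ℝ) : ℝ :=
  deriv (fun x => U (x, p.2)) p.1

/-- The partial derivative of `U : ℝ × ℝ → ℝ` in the second (y) variable. -/
noncomputable def pderivY (U : ℝ × ℝ → ℝ) (p : ℝ × ℝ) : ℝ :=
  deriv (fun y => U (p.1, y)) p.2

lemma aux_not_integrableOn {f : ℝ → ℝ} {δ a : ℝ} (hδ : 0 < δ)
    (h : ∀ y ∈ Ici a, δ ≤ f y) : ¬ IntegrableOn f (Ici a) := by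
  intro hi
  have h1 : (∫⁻ y in Ici a, ENNReal.ofReal δ) ≤ ∫⁻ y in Ici a, ‖f y‖₊ := by
    refine setLIntegral_mono' measurableSet_Ici fun y hy => ?_
    calc ENNReal.ofReal δ ≤ ENNReal.ofReal ‖f y‖ :=
          ENNReal.ofReal_le_ofReal ((h y hy).trans (le_abs_self _))
      _ = ‖f y‖₊ := ofReal_norm _
  rw [lintegral_const, Measure.restrict_apply_univ, Real.volume_Ici,
    ENNReal.mul_top (by positivity)] at h1
  have h2 := hi.2
  unfold HasFiniteIntegral at h2
  rw [show (∫⁻ y in Ici a, ‖f y‖ₑ) = ⊤ from top_le_iff.mp h1] at h2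
  exact absurd h2 (by simp)

lemma aux_fubini {f : ℝ × ℝ → ℝ} {a b Y : ℝ} (hab : a ≤ b)
    (hf : IntegrableOn f (Icc a b ×ˢ Ici Y)) :
    IntegrableOn (fun y => ∫ x in a..b, f (x, y)) (Ici Y) := by
  rw [IntegrableOn, Measure.volume_eq_prod, ← Measure.prod_restrict] at hf
  have h := hf.integral_prod_right
  refine h.congr (Eventually.of_forall fun y => ?_)
  simp only
  rw [intervalIntegral.integral_of_le hab, ← integral_Icc_eq_integral_Ioc]

lemma aux_slice_cont {Y : ℝ} {G : ℝ × ℝ → ℝ} (hG : ContinuousOn G (univ ×ˢ Ioi Y))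
    {y : ℝ} (hy : Y < y) : Continuous (fun x => G (x, y)) := by
  rw [← continuousOn_univ]
  exact hG.comp (Continuous.continuousOn (by fun_prop))
    (fun x _ => by simp [Set.mem_prod, hy])

lemma aux_hasDerivAt_param {Y : ℝ} {G G' : ℝ × ℝ → ℝ} {b : ℝ} (hb : 0 ≤ b)
    (hG : ContinuousOn G (univ ×ˢ Ioi Y))
    (hG' : ContinuousOn G' (univ ×ˢ Ioi Y))
    (hd : ∀ p : ℝ × ℝ, p.2 ∈ Ioi Y → HasDerivAt (fun y => G (p.1, y)) (G' p) p.2)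
    {y₀ : ℝ} (hy₀ : Y < y₀) :
    HasDerivAt (fun y => ∫ x in (0:ℝ)..b, G (x, y)) (∫ x in (0:ℝ)..b, G' (x, y₀)) y₀ := by
  set ε : ℝ := (y₀ - Y) / 2 with hε_def
  have hε : 0 < ε := by simp [hε_def]; linarith
  have hYε : Y < y₀ - ε := by simp [hε_def]; linarith
  set K : Set (ℝ × ℝ) := Icc 0 b ×ˢ Icc (y₀ - ε) (y₀ + ε) with hK_def
  have hKS : K ⊆ univ ×ˢ Ioi Y := by
    rintro ⟨x, y⟩ ⟨hx, hy⟩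
    exact ⟨trivial, lt_of_lt_of_le hYε hy.1⟩
  obtain ⟨C, hC⟩ := (isCompact_Icc.prod isCompact_Icc).exists_bound_of_continuousOn
    (hG'.mono hKS)
  have hball : ∀ y ∈ Metric.ball y₀ ε, Y < y := by
    intro y hy
    rw [Real.ball_eq_Ioo] at hy
    exact lt_trans hYε hy.1
  have main := intervalIntegral.hasDerivAt_integral_of_dominated_loc_of_deriv_le
    (F := fun y x => G (x, y)) (F' := fun y x => G' (x, y)) (a := 0) (b := b)
    (bound := fun _ => C) (x₀ := y₀) (μ := volume) (Metric.ball_mem_nhds y₀ hε)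
    ?_ ?_ ?_ ?_ ?_ ?_
  · exact main.2
  · filter_upwards [Ioi_mem_nhds hy₀] with y hy
    exact (aux_slice_cont hG hy).aestronglyMeasurable
  · exact (aux_slice_cont hG hy₀).intervalIntegrable _ _
  · exact (aux_slice_cont hG' hy₀).aestronglyMeasurable
  · refine Eventually.of_forall fun x hx y hy => ?_
    refine hC (x, y) ⟨?_, ?_⟩
    · rw [uIoc_of_le hb] at hx
      exact ⟨hx.1.le, hx.2⟩
    · rw [Real.ball_eq_Ioo] at hy
      exact ⟨hy.1.le, hy.2.le⟩
  · exact intervalIntegrable_const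
  · refine Eventually.of_forall fun x hx y hy => ?_
    exact hd (x, y) (hball y hy)

set_option maxHeartbeats 2000000 in
/-- Analytic heart of Proposition 4.5 (prop:proper-implies-parabolic): if `U` is `C²` on
the strip `ℝ × [Y, ∞)`, subharmonic there, `2π`-periodic in `x`, and has finite Dirichlet
energy on the strip, then there is a constant `M` and a sequence `yₙ → ∞` along which
`U(0, yₙ) ≤ M`. -/
theorem exists_seq_bounded_of_subharmonic_finite_energy
    (Y : ℝ) (U : ℝ × ℝ → ℝ)
    (hC2 : ContDiffOn ℝ 2 U (Set.univ ×ˢ Set.Ici Y))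
    (hsub : ∀ p : ℝ × ℝ, Y ≤ p.2 →
      0 ≤ pderivX (pderivX U) p + pderivY (pderivY U) p)
    (hper : ∀ x y : ℝ, Y ≤ y → U (x + 2 * π, y) = U (x, y))
    (henergy : IntegrableOn (fun p : ℝ × ℝ => (pderivX U p) ^ 2 + (pderivY U p) ^ 2)
      (Set.Icc 0 (2 * π) ×ˢ Set.Ici Y)) :
    ∃ (M : ℝ) (ys : ℕ → ℝ), Tendsto ys atTop atTop ∧ ∀ n, U (0, ys n) ≤ M := by
  have hπ : (0:ℝ) < 2 * π := by positivity
  set S : Set (ℝ × ℝ) := univ ×ˢ Ioi Y with hS_def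
  have hSopen : IsOpen S := isOpen_univ.prod isOpen_Ioi
  have hU2 : ContDiffOn ℝ 2 U S :=
    hC2.mono (Set.prod_mono subset_rfl Ioi_subset_Ici_self)
  set Ux : ℝ × ℝ → ℝ := fun p => fderiv ℝ U p (1, 0) with hUx_def
  set Uy : ℝ × ℝ → ℝ := fun p => fderiv ℝ U p (0, 1) with hUy_def
  have hmemS : ∀ p : ℝ × ℝ, Y < p.2 → p ∈ S := fun p hp => ⟨trivial, hp⟩
  have hdiffU : ∀ p ∈ S, DifferentiableAt ℝ U p := fun p hp =>
    (hU2.contDiffAt (hSopen.mem_nhds hp)).differentiableAt (by norm_num)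
  have hUxD : ∀ p ∈ S, HasDerivAt (fun x => U (x, p.2)) (Ux p) p.1 := by
    intro p hp
    have h1 : HasDerivAt (fun x : ℝ => ((x, p.2) : ℝ × ℝ)) (1, 0) p.1 :=
      (hasDerivAt_id p.1).prodMk (hasDerivAt_const _ _)
    have h2 := (hdiffU p hp).hasFDerivAt
    have h3 := HasFDerivAt.comp_hasDerivAt p.1 (by simpa using h2) h1
    exact h3
  have hUyD : ∀ p ∈ S, HasDerivAt (fun y => U (p.1, y)) (Uy p) p.2 := by
    intro p hp
    have h1 : HasDerivAt (fun y : ℝ => ((p.1, y) : ℝ × ℝ)) (0, 1) p.2 :=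
      (hasDerivAt_const _ _).prodMk (hasDerivAt_id p.2)
    have h2 := (hdiffU p hp).hasFDerivAt
    exact HasFDerivAt.comp_hasDerivAt p.2 (by simpa using h2) h1
  have hpX : ∀ p ∈ S, pderivX U p = Ux p := fun p hp => (hUxD p hp).deriv
  have hpY : ∀ p ∈ S, pderivY U p = Uy p := fun p hp => (hUyD p hp).deriv
  have hfd : ContDiffOn ℝ 1 (fderiv ℝ U) S := hU2.fderiv_of_isOpen hSopen (by norm_num)
  have hUx1 : ContDiffOn ℝ 1 Ux S := hfd.clm_apply contDiffOn_const
  have hUy1 : ContDiffOn ℝ 1 Uy S := hfd.clm_apply contDiffOn_const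
  have hUxC : ContinuousOn Ux S := hUx1.continuousOn
  have hUyC : ContinuousOn Uy S := hUy1.continuousOn
  set Uxx : ℝ × ℝ → ℝ := fun p => fderiv ℝ Ux p (1, 0) with hUxx_def
  set Uyy : ℝ × ℝ → ℝ := fun p => fderiv ℝ Uy p (0, 1) with hUyy_def
  have hdiffUx : ∀ p ∈ S, DifferentiableAt ℝ Ux p := fun p hp =>
    (hUx1.contDiffAt (hSopen.mem_nhds hp)).differentiableAt one_ne_zero
  have hdiffUy : ∀ p ∈ S, DifferentiableAt ℝ Uy p := fun p hp =>
    (hUy1.contDiffAt (hSopen.mem_nhds hp)).differentiableAt one_ne_zero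
  have hUxxD : ∀ p ∈ S, HasDerivAt (fun x => Ux (x, p.2)) (Uxx p) p.1 := by
    intro p hp
    have h1 : HasDerivAt (fun x : ℝ => ((x, p.2) : ℝ × ℝ)) (1, 0) p.1 :=
      (hasDerivAt_id p.1).prodMk (hasDerivAt_const _ _)
    exact HasFDerivAt.comp_hasDerivAt p.1 (by simpa using (hdiffUx p hp).hasFDerivAt) h1
  have hUyyD : ∀ p ∈ S, HasDerivAt (fun y => Uy (p.1, y)) (Uyy p) p.2 := by
    intro p hp
    have h1 : HasDerivAt (fun y : ℝ => ((p.1, y) : ℝ × ℝ)) (0, 1) p.2 :=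
      (hasDerivAt_const _ _).prodMk (hasDerivAt_id p.2)
    exact HasFDerivAt.comp_hasDerivAt p.2 (by simpa using (hdiffUy p hp).hasFDerivAt) h1
  have hUxxC : ContinuousOn Uxx S :=
    ((hUx1.fderiv_of_isOpen hSopen (le_of_eq (zero_add 1))).clm_apply contDiffOn_const).continuousOn
  have hUyyC : ContinuousOn Uyy S :=
    ((hUy1.fderiv_of_isOpen hSopen (le_of_eq (zero_add 1))).clm_apply contDiffOn_const).continuousOn
  -- subharmonicity in terms of Uxx, Uyy
  have hsub2 : ∀ p ∈ S, 0 ≤ Uxx p + Uyy p := by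
    intro p hp
    have h1 : pderivX (pderivX U) p = Uxx p := by
      have he : (fun x => pderivX U (x, p.2)) = fun x => Ux (x, p.2) :=
        funext fun x => hpX (x, p.2) (hmemS _ hp.2)
      show deriv (fun x => pderivX U (x, p.2)) p.1 = Uxx p
      rw [he]
      exact (hUxxD p hp).deriv
    have h2 : pderivY (pderivY U) p = Uyy p := by
      have he : (fun y => pderivY U (p.1, y)) =ᶠ[nhds p.2] fun y => Uy (p.1, y) := by
        filter_upwards [Ioi_mem_nhds hp.2] with y hy
        exact hpY (p.1, y) (hmemS _ hy)
      show deriv (fun y => pderivY U (p.1, y)) p.2 = Uyy p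
      rw [he.deriv_eq]
      exact (hUyyD p hp).deriv
    have := hsub p (le_of_lt hp.2)
    rw [h1, h2] at this
    exact this
  -- periodicity of Ux
  have hperx : ∀ x y : ℝ, Y < y → Ux (x + 2 * π, y) = Ux (x, y) := by
    intro x y hy
    have hg : (fun x => U (x + 2 * π, y)) = fun x => U (x, y) :=
      funext fun x => hper x y hy.le
    have e1 : Ux (x + 2 * π, y) = deriv (fun x => U (x, y)) (x + 2 * π) :=
      ((hUxD (x + 2 * π, y) (hmemS _ hy)).deriv).symm
    have e2 : Ux (x, y) = deriv (fun x => U (x, y)) x :=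
      ((hUxD (x, y) (hmemS _ hy)).deriv).symm
    rw [e1, e2, ← deriv_comp_add_const (fun x => U (x, y)) (2 * π) x, hg]
  -- slice integrability facts
  have hIUxx : ∀ y : ℝ, Y < y → IntervalIntegrable (fun x => Uxx (x, y)) volume 0 (2 * π) :=
    fun y hy => (aux_slice_cont hUxxC hy).intervalIntegrable _ _
  have hIUyy : ∀ y : ℝ, Y < y → IntervalIntegrable (fun x => Uyy (x, y)) volume 0 (2 * π) :=
    fun y hy => (aux_slice_cont hUyyC hy).intervalIntegrable _ _
  -- integral of Uxx over a period vanishes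
  have hxx0 : ∀ y : ℝ, Y < y → (∫ x in (0:ℝ)..(2 * π), Uxx (x, y)) = 0 := by
    intro y hy
    have := intervalIntegral.integral_eq_sub_of_hasDerivAt
      (f := fun x => Ux (x, y)) (f' := fun x => Uxx (x, y))
      (fun x _ => hUxxD (x, y) (hmemS _ hy)) (hIUxx y hy)
    rw [this]
    show Ux (2 * π, y) - Ux (0, y) = 0
    have h2 := hperx 0 y hy
    rw [zero_add] at h2
    rw [h2, sub_self]
  set m : ℝ → ℝ := fun y => ∫ x in (0:ℝ)..(2 * π), U (x, y) with hm_def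
  set m1 : ℝ → ℝ := fun y => ∫ x in (0:ℝ)..(2 * π), Uy (x, y) with hm1_def
  have hUC : ContinuousOn U S := hU2.continuousOn
  have hmD : ∀ y ∈ Ioi Y, HasDerivAt m (m1 y) y := fun y hy =>
    aux_hasDerivAt_param hπ.le hUC hUyC (fun p hp => hUyD p (hmemS _ hp)) hy
  have hm1D : ∀ y ∈ Ioi Y, HasDerivAt m1 (∫ x in (0:ℝ)..(2 * π), Uyy (x, y)) y := fun y hy =>
    aux_hasDerivAt_param hπ.le hUyC hUyyC (fun p hp => hUyyD p (hmemS _ hp)) hy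
  have hm1'nonneg : ∀ y ∈ Ioi Y, 0 ≤ ∫ x in (0:ℝ)..(2 * π), Uyy (x, y) := by
    intro y hy
    have hadd : (∫ x in (0:ℝ)..(2 * π), (Uxx (x, y) + Uyy (x, y)))
        = (∫ x in (0:ℝ)..(2 * π), Uxx (x, y)) + ∫ x in (0:ℝ)..(2 * π), Uyy (x, y) :=
      intervalIntegral.integral_add (hIUxx y hy) (hIUyy y hy)
    have hnn : 0 ≤ ∫ x in (0:ℝ)..(2 * π), (Uxx (x, y) + Uyy (x, y)) :=
      intervalIntegral.integral_nonneg hπ.le fun x _ => hsub2 (x, y) (hmemS _ hy)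
    rw [hadd, hxx0 y hy, zero_add] at hnn
    exact hnn
  have hm1mono : MonotoneOn m1 (Ioi Y) := by
    refine monotoneOn_of_deriv_nonneg (convex_Ioi Y)
      (fun y hy => (hm1D y hy).continuousAt.continuousWithinAt) ?_ ?_
    · rw [interior_Ioi]
      exact fun y hy => ((hm1D y hy).differentiableAt).differentiableWithinAt
    · rw [interior_Ioi]
      intro y hy
      rw [(hm1D y hy).deriv]
      exact hm1'nonneg y hy
  -- energy slice function
  set B : ℝ → ℝ := fun y => ∫ x in (0:ℝ)..(2 * π),
    ((pderivX U (x, y)) ^ 2 + (pderivY U (x, y)) ^ 2) with hB_def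
  have hBint : IntegrableOn B (Ici Y) :=
    aux_fubini (f := fun p : ℝ × ℝ => (pderivX U p) ^ 2 + (pderivY U p) ^ 2) hπ.le henergy
  have hIUx2 : ∀ y : ℝ, Y < y →
      IntervalIntegrable (fun x => Ux (x, y) ^ 2) volume 0 (2 * π) :=
    fun y hy => ((aux_slice_cont hUxC hy).pow 2).intervalIntegrable _ _
  have hIUy2 : ∀ y : ℝ, Y < y →
      IntervalIntegrable (fun x => Uy (x, y) ^ 2) volume 0 (2 * π) :=
    fun y hy => ((aux_slice_cont hUyC hy).pow 2).intervalIntegrable _ _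
  have hIUy : ∀ y : ℝ, Y < y →
      IntervalIntegrable (fun x => Uy (x, y)) volume 0 (2 * π) :=
    fun y hy => (aux_slice_cont hUyC hy).intervalIntegrable _ _
  have hBsplit : ∀ y : ℝ, Y < y → B y
      = (∫ x in (0:ℝ)..(2 * π), Ux (x, y) ^ 2) + ∫ x in (0:ℝ)..(2 * π), Uy (x, y) ^ 2 := by
    intro y hy
    have hcongr : B y = ∫ x in (0:ℝ)..(2 * π), (Ux (x, y) ^ 2 + Uy (x, y) ^ 2) := by
      refine intervalIntegral.integral_congr fun x _ => ?_
      rw [hpX (x, y) (hmemS _ hy), hpY (x, y) (hmemS _ hy)]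
    rw [hcongr, intervalIntegral.integral_add (hIUx2 y hy) (hIUy2 y hy)]
  -- m1 is nonpositive
  have hm1le : ∀ y ∈ Ioi Y, m1 y ≤ 0 := by
    by_contra hcon
    push_neg at hcon
    obtain ⟨y₀, hy₀S, hy₀pos⟩ := hcon
    set c : ℝ := m1 y₀ with hc_def
    have hB_lb : ∀ y ∈ Ici y₀, c ^ 2 / (2 * (2 * π)) ≤ B y := by
      intro y hy
      have hyY : Y < y := lt_of_lt_of_le hy₀S hy
      have hc_le : c ≤ m1 y := hm1mono hy₀S hyY hy
      set ε : ℝ := c / (2 * π) with hε_def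
      have hε_pos : 0 < ε := div_pos hy₀pos hπ
      have hε_eq : 2 * π * ε = c := by
        rw [hε_def]; field_simp
      have h0 : 0 ≤ ∫ x in (0:ℝ)..(2 * π), (Uy (x, y) - ε) ^ 2 :=
        intervalIntegral.integral_nonneg hπ.le fun x _ => sq_nonneg _
      have hexp : (∫ x in (0:ℝ)..(2 * π), (Uy (x, y) - ε) ^ 2)
          = (∫ x in (0:ℝ)..(2 * π), Uy (x, y) ^ 2)
            - 2 * ε * (∫ x in (0:ℝ)..(2 * π), Uy (x, y)) + (2 * π) * ε ^ 2 := by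
        have he : (∫ x in (0:ℝ)..(2 * π), (Uy (x, y) - ε) ^ 2)
            = ∫ x in (0:ℝ)..(2 * π), (Uy (x, y) ^ 2 - 2 * ε * Uy (x, y) + ε ^ 2) :=
          intervalIntegral.integral_congr fun x _ => by ring
        rw [he, intervalIntegral.integral_add
            ((hIUy2 y hyY).sub ((hIUy y hyY).const_mul (2 * ε)))
            intervalIntegrable_const,
          intervalIntegral.integral_sub (hIUy2 y hyY) ((hIUy y hyY).const_mul (2 * ε)),
          intervalIntegral.integral_const_mul, intervalIntegral.integral_const]
        simp [smul_eq_mul]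
      have hm1y : m1 y = ∫ x in (0:ℝ)..(2 * π), Uy (x, y) := rfl
      have hy2_lb : ε * c ≤ ∫ x in (0:ℝ)..(2 * π), Uy (x, y) ^ 2 := by
        nlinarith [mul_le_mul_of_nonneg_left hc_le (by linarith : (0:ℝ) ≤ 2 * ε)]
      have hx2_nn : 0 ≤ ∫ x in (0:ℝ)..(2 * π), Ux (x, y) ^ 2 :=
        intervalIntegral.integral_nonneg hπ.le fun x _ => sq_nonneg _
      have hδ : c ^ 2 / (2 * (2 * π)) = ε * c / 2 := by
        rw [hε_def]; field_simp
      rw [hBsplit y hyY, hδ]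
      nlinarith [mul_pos hε_pos hy₀pos]
    exact aux_not_integrableOn
      (div_pos (pow_pos hy₀pos 2) (by positivity)) hB_lb
      (hBint.mono_set (Ici_subset_Ici.mpr hy₀S.le))
  -- m is antitone
  have hmanti : AntitoneOn m (Ioi Y) := by
    refine antitoneOn_of_deriv_nonpos (convex_Ioi Y)
      (fun y hy => (hmD y hy).continuousAt.continuousWithinAt) ?_ ?_
    · rw [interior_Ioi]
      exact fun y hy => ((hmD y hy).differentiableAt).differentiableWithinAt
    · rw [interior_Ioi]
      intro y hy
      rw [(hmD y hy).deriv]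
      exact hm1le y hy
  -- pointwise bound
  have hptw : ∀ y : ℝ, Y < y →
      U (0, y) * (2 * π) ≤ m y + (2 * π) * ∫ x in (0:ℝ)..(2 * π), |Ux (x, y)| := by
    intro y hy
    have hcx : Continuous fun x => Ux (x, y) := aux_slice_cont hUxC hy
    have hcU : Continuous fun x => U (x, y) := aux_slice_cont hUC hy
    have hIabs : IntervalIntegrable (fun x => |Ux (x, y)|) volume 0 (2 * π) :=
      hcx.abs.intervalIntegrable _ _
    set I : ℝ := ∫ x in (0:ℝ)..(2 * π), |Ux (x, y)| with hI_def
    have hFTC : ∀ x : ℝ, U (x, y) - U (0, y) = ∫ t in (0:ℝ)..x, Ux (t, y) := fun x =>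
      (intervalIntegral.integral_eq_sub_of_hasDerivAt
        (f := fun x => U (x, y)) (f' := fun t => Ux (t, y)) (a := 0) (b := x)
        (fun t _ => hUxD (t, y) (hmemS _ hy)) (hcx.intervalIntegrable _ _)).symm
    have hkey : ∀ x ∈ Icc (0:ℝ) (2 * π), U (0, y) ≤ U (x, y) + I := by
      intro x hx
      have h1 : |∫ t in (0:ℝ)..x, Ux (t, y)| ≤ ∫ t in (0:ℝ)..x, |Ux (t, y)| :=
        intervalIntegral.abs_integral_le_integral_abs hx.1
      have h2 : (∫ t in (0:ℝ)..x, |Ux (t, y)|) ≤ I :=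
        intervalIntegral.integral_mono_interval le_rfl hx.1 hx.2
          (Eventually.of_forall fun t => abs_nonneg _) hIabs
      have h3 := hFTC x
      have h4 := neg_abs_le (∫ t in (0:ℝ)..x, Ux (t, y))
      linarith
    have hint := intervalIntegral.integral_mono_on hπ.le
      (_root_.intervalIntegrable_const (μ := volume) (c := U (0, y)))
      ((hcU.intervalIntegrable _ _).add (_root_.intervalIntegrable_const (μ := volume) (c := I))) hkey
    rw [intervalIntegral.integral_const,
      intervalIntegral.integral_add (hcU.intervalIntegrable _ _)
        (_root_.intervalIntegrable_const (μ := volume) (c := I)),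
      intervalIntegral.integral_const] at hint
    simp only [sub_zero, smul_eq_mul] at hint
    have hmy : m y = ∫ x in (0:ℝ)..(2 * π), U (x, y) := rfl
    linarith
  -- choice of the sequence
  set Y1 : ℝ := Y + 1 with hY1_def
  have hY1Y : Y < Y1 := by rw [hY1_def]; linarith
  have hchoice : ∀ n : ℕ, ∃ y : ℝ, max (n : ℝ) Y1 ≤ y ∧ B y ≤ 1 := by
    intro n
    by_contra hcon
    push_neg at hcon
    refine aux_not_integrableOn one_pos (fun y hy => (hcon y hy).le)
      (hBint.mono_set (Ici_subset_Ici.mpr ?_))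
    exact le_trans hY1Y.le (le_max_right _ _)
  choose ys hys using hchoice
  refine ⟨m Y1 / (2 * π) + (1 + 2 * π) / 2, ys, ?_, ?_⟩
  · exact tendsto_atTop_mono (fun n => le_trans (le_max_left _ _) (hys n).1)
      tendsto_natCast_atTop_atTop
  · intro n
    obtain ⟨hge, hB1⟩ := hys n
    set y : ℝ := ys n with hy_def
    have hyY1 : Y1 ≤ y := le_trans (le_max_right _ _) hge
    have hyY : Y < y := lt_of_lt_of_le hY1Y hyY1
    have hcx : Continuous fun x => Ux (x, y) := aux_slice_cont hUxC hyY
    have hx2_le : (∫ x in (0:ℝ)..(2 * π), Ux (x, y) ^ 2) ≤ 1 := by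
      have hy2_nn : 0 ≤ ∫ x in (0:ℝ)..(2 * π), Uy (x, y) ^ 2 :=
        intervalIntegral.integral_nonneg hπ.le fun x _ => sq_nonneg _
      have := hBsplit y hyY
      linarith
    have habs_le : (∫ x in (0:ℝ)..(2 * π), |Ux (x, y)|)
        ≤ ((∫ x in (0:ℝ)..(2 * π), Ux (x, y) ^ 2) + 2 * π) / 2 := by
      have hptle : ∀ x ∈ Icc (0:ℝ) (2 * π), |Ux (x, y)| ≤ (Ux (x, y) ^ 2 + 1) / 2 :=
        fun x _ => by nlinarith [sq_nonneg (|Ux (x, y)| - 1), sq_abs (Ux (x, y))]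
      have hmono := intervalIntegral.integral_mono_on (μ := volume) hπ.le
        (hcx.abs.intervalIntegrable _ _)
        ((((hcx.pow 2).add (continuous_const (y := (1:ℝ)))).div_const 2).intervalIntegrable _ _) hptle
      have heq : (∫ x in (0:ℝ)..(2 * π), (Ux (x, y) ^ 2 + 1) / 2)
          = ((∫ x in (0:ℝ)..(2 * π), Ux (x, y) ^ 2) + 2 * π) / 2 := by
        rw [intervalIntegral.integral_div,
          intervalIntegral.integral_add (hIUx2 y hyY) intervalIntegrable_const,
          intervalIntegral.integral_const]
        simp
      rw [← heq]
      exact hmono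
    have hm_le : m y ≤ m Y1 := hmanti hY1Y hyY hyY1
    have hp := hptw y hyY
    have hI_le : (∫ x in (0:ℝ)..(2 * π), |Ux (x, y)|) ≤ (1 + 2 * π) / 2 := by linarith
    have h2 := mul_le_mul_of_nonneg_left hI_le hπ.le
    have hfinal : U (0, y) * (2 * π) ≤ m Y1 + (2 * π) * ((1 + 2 * π) / 2) := by linarith
    have h3 : U (0, y) ≤ (m Y1 + (2 * π) * ((1 + 2 * π) / 2)) / (2 * π) := by
      rw [le_div_iff₀ hπ]; exact hfinal
    have h4 : (m Y1 + (2 * π) * ((1 + 2 * π) / 2)) / (2 * π)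
        = m Y1 / (2 * π) + (1 + 2 * π) / 2 := by
      rw [add_div, mul_div_cancel_left₀ _ hπ.ne']
    linarith [h3, h4.le, h4.ge]
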